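/- arXiv:1808.09669 — 5 statements merged into one kernel-verified Lean document; each statement's English description precedes it below -/
import Mathlib

section
/- Let x_1, ..., x_n be positive real numbers such that their sum equals n and the sum of (x_i - 1)^2 equals δ with δ ≤ 1. Then the product of the x_i is at most exp(-δ/6). -/
lemma log_le_aux (x : ℝ) (hx : 0 < x) (hx2 : x ≤ 2) :
    Real.log x ≤ (x - 1) - (x - 1) ^ 2 / 6 := by
  have hsp : 0 < Real.sqrt x := Real.sqrt_pos.mpr hx
  have hs2 : Real.sqrt x ^ 2 = x := Real.sq_sqrt hx.le
  have hlog : Real.log x ≤ 2 * (Real.sqrt x - 1) := by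
    have h1 : Real.log (Real.sqrt x) ≤ Real.sqrt x - 1 :=
      Real.log_le_sub_one_of_pos hsp
    have h2 : Real.log (Real.sqrt x) = Real.log x / 2 := Real.log_sqrt hx.le
    linarith
  set s := Real.sqrt x with hs
  have hsle : s ^ 2 ≤ 2 := by rw [hs2]; exact hx2
  nlinarith [sq_nonneg (s - 1), sq_nonneg (s + 1), sq_nonneg (2 * s - 3),
    mul_nonneg (sq_nonneg (s - 1)) hsp.le, sq_nonneg (s * s - 1),
    mul_nonneg (mul_nonneg (sq_nonneg (s - 1)) hsp.le) hsp.le]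

theorem robust_amgm (n : ℕ) (x : Fin n → ℝ) (δ : ℝ)
    (hpos : ∀ i, 0 < x i)
    (hsum : ∑ i, x i = (n : ℝ))
    (hdist : ∑ i, (x i - 1) ^ 2 = δ)
    (hδ : δ ≤ 1) :
    ∏ i, x i ≤ Real.exp (-δ / 6) := by
  have hle2 : ∀ i, x i ≤ 2 := by
    intro i
    have h1 : (x i - 1) ^ 2 ≤ δ := by
      rw [← hdist]
      exact Finset.single_le_sum (f := fun j => (x j - 1) ^ 2) (fun j _ => sq_nonneg _) (Finset.mem_univ i)
    nlinarith
  have key : ∑ i, Real.log (x i) ≤ -δ / 6 := by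
    have h : ∑ i, Real.log (x i) ≤ ∑ i, ((x i - 1) - (x i - 1) ^ 2 / 6) :=
      Finset.sum_le_sum fun i _ => log_le_aux _ (hpos i) (hle2 i)
    have h2 : ∑ i, ((x i - 1) - (x i - 1) ^ 2 / 6)
        = (∑ i, x i - n) - (∑ i, (x i - 1) ^ 2) / 6 := by
      rw [Finset.sum_sub_distrib, Finset.sum_sub_distrib, ← Finset.sum_div]
      simp
    rw [h2, hsum, hdist] at h
    linarith
  have hprod : ∏ i, x i = Real.exp (∑ i, Real.log (x i)) := by
    rw [Real.exp_sum]
    exact (Finset.prod_congr rfl fun i _ => (Real.exp_log (hpos i)).symm)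
  rw [hprod]
  exact Real.exp_le_exp.mpr key
end

section
/- Let M be an n×n complex matrix such that M Mᵀconjugate = c·I_n for some c > 0 (i.e., M is a positive scalar multiple of a unitary matrix). Then for all A, B ∈ SL(n, ℂ), the Frobenius norm of A M Bᵀ is at least the Frobenius norm of M. -/
open Matrix

/-- The Frobenius norm of a complex matrix. -/
noncomputable def frobeniusNorm {n : ℕ} (X : Matrix (Fin n) (Fin n) ℂ) : ℝ :=
  Real.sqrt (∑ i, ∑ j, ‖X i j‖ ^ 2)

section KNaux
open Finset ComplexOrder

lemma trace_eq_sum_eigs {n : ℕ} (P : Matrix (Fin n) (Fin n) ℂ) (hP : P.IsHermitian) :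
    P.trace = ∑ i, (hP.eigenvalues i : ℂ) := by
  nth_rewrite 1 [hP.spectral_theorem]
  rw [Unitary.conjStarAlgAut_apply]
  rw [Matrix.trace_mul_cycle,
    (Matrix.mem_unitaryGroup_iff').mp (hP.eigenvectorUnitary).2, one_mul,
    Matrix.trace_diagonal]
  rfl

lemma sum_abs_sq_eq {n : ℕ} (Y : Matrix (Fin n) (Fin n) ℂ) :
    ∑ i, ∑ j, ‖Y i j‖ ^ 2 = (Matrix.trace (Y * Yᴴ)).re := by
  rw [Matrix.trace]
  simp only [Matrix.diag_apply, Matrix.mul_apply, Matrix.conjTranspose_apply,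
    Complex.mul_conj, Complex.re_sum]
  simp [Complex.sq_norm, Complex.normSq_apply]

theorem kempf_ness_aux {n : ℕ} (M : Matrix (Fin n) (Fin n) ℂ) (c : ℝ)
    (hc : 0 < c) (hM : M * Mᴴ = (c : ℂ) • (1 : Matrix (Fin n) (Fin n) ℂ)) :
    ∀ A B : Matrix (Fin n) (Fin n) ℂ, A.det = 1 → B.det = 1 →
      Real.sqrt (∑ i, ∑ j, ‖M i j‖ ^ 2) ≤
      Real.sqrt (∑ i, ∑ j, ‖(A * M * Bᵀ) i j‖ ^ 2) := by
  intro A B hA hB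
  rcases Nat.eq_zero_or_pos n with hn | hn
  · subst hn; simp
  set X := A * M * Bᵀ with hXdef
  have hPSD : (X * Xᴴ).PosSemidef := posSemidef_self_mul_conjTranspose X
  set lam := hPSD.1.eigenvalues with hlam
  have hlam_nonneg : ∀ i, 0 ≤ lam i := fun i => hPSD.eigenvalues_nonneg i
  -- left side value
  have h1 : ∑ i, ∑ j, ‖M i j‖ ^ 2 = c * n := by
    rw [sum_abs_sq_eq, hM]
    simp [Matrix.trace_smul, Matrix.trace_one, Complex.ofReal_mul]
  -- right side value
  have h2 : ∑ i, ∑ j, ‖X i j‖ ^ 2 = ∑ i, lam i := by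
    rw [sum_abs_sq_eq, trace_eq_sum_eigs _ hPSD.1]
    rw [Complex.re_sum]
    simp
    rfl
  -- determinant computation
  have hdetX : X.det = M.det := by
    simp [hXdef, Matrix.det_mul, hA, hB, Matrix.det_transpose]
  have h3c : (X * Xᴴ).det = ((c ^ n : ℝ) : ℂ) := by
    rw [Matrix.det_mul, Matrix.det_conjTranspose, hdetX,
      ← Matrix.det_conjTranspose M, ← Matrix.det_mul, hM]
    simp [Matrix.det_smul]
  have h3 : ∏ i, lam i = c ^ n := by
    have := hPSD.1.det_eq_prod_eigenvalues
    rw [h3c] at this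
    have : ((c ^ n : ℝ) : ℂ) = ((∏ i, lam i : ℝ) : ℂ) := by
      rw [this]; push_cast; rfl
    exact_mod_cast this.symm
  -- AM-GM
  have h4 : c * n ≤ ∑ i, lam i := by
    have hAM := Real.geom_mean_le_arith_mean_weighted Finset.univ
      (fun _ => (n : ℝ)⁻¹) lam (fun i _ => by positivity)
      (by simp [Finset.card_univ]; field_simp) (fun i _ => hlam_nonneg i)
    have hprod : ∏ i : Fin n, lam i ^ ((n : ℝ)⁻¹) = c := by
      rw [Real.finset_prod_rpow _ _ (fun i _ => hlam_nonneg i), h3,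
        Real.pow_rpow_inv_natCast hc.le hn.ne']
    have hn' : (0:ℝ) < n := by exact_mod_cast hn
    have hsum : ∑ i : Fin n, (n:ℝ)⁻¹ * lam i = (∑ i, lam i) / n := by
      rw [← Finset.mul_sum]; ring
    rw [hprod, hsum] at hAM
    exact (le_div_iff₀ hn').mp hAM
  apply Real.sqrt_le_sqrt
  rw [h1, h2]
  exact h4

end KNaux

theorem kempf_ness_minimality {n : ℕ} (M : Matrix (Fin n) (Fin n) ℂ) (c : ℝ)
    (hc : 0 < c) (hM : M * Mᴴ = (c : ℂ) • (1 : Matrix (Fin n) (Fin n) ℂ)) :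
    ∀ A B : Matrix (Fin n) (Fin n) ℂ, A.det = 1 → B.det = 1 →
      frobeniusNorm M ≤ frobeniusNorm (A * M * Bᵀ) := by
  intro A B hA hB
  exact kempf_ness_aux M c hc hM A B hA hB
end

section
/- Let A = (A_1, ..., A_m) be a tuple of n×n complex matrices with Σ_i A_i A_i^† = Σ_i A_i^† A_i = I_n (doubly stochastic tuple). Then for every subspace V ⊆ ℂ^n, dim(Σ_{i=1}^m A_i(V)) ≥ dim(V), where A_i(V) = {A_i v : v ∈ V} and the sum of subspaces is their span. -/
set_option maxHeartbeats 1000000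

open Matrix
open scoped InnerProductSpace

section helpers

variable {n : ℕ}

private lemma toEuclideanLin_mul (M N : Matrix (Fin n) (Fin n) ℂ) :
    Matrix.toEuclideanLin (M * N) =
      (Matrix.toEuclideanLin M).comp (Matrix.toEuclideanLin N) := by
  ext x
  simp [Matrix.toEuclideanLin_apply, Matrix.mulVec_mulVec]

private lemma toEuclideanLin_one :
    Matrix.toEuclideanLin (1 : Matrix (Fin n) (Fin n) ℂ) = LinearMap.id := by
  ext x
  simp [Matrix.toEuclideanLin_apply]

end helpers

theorem doublyStochastic_dim_nondecreasing {n m : ℕ} (A : Fin m → Matrix (Fin n) (Fin n) ℂ)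
    (h1 : ∑ i, A i * (A i)ᴴ = 1) (h2 : ∑ i, (A i)ᴴ * A i = 1) :
    ∀ V : Submodule ℂ (Fin n → ℂ),
      Module.finrank ℂ V ≤
        Module.finrank ℂ (⨆ i, V.map (Matrix.toLin' (A i)) : Submodule ℂ (Fin n → ℂ)) := by
  intro V
  classical
  set E := EuclideanSpace ℂ (Fin n)
  let e : (Fin n → ℂ) ≃ₗ[ℂ] E := (WithLp.linearEquiv 2 ℂ (Fin n → ℂ)).symm
  let f : Fin m → (E →ₗ[ℂ] E) := fun i => Matrix.toEuclideanLin (A i)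
  -- relation between toLin' and toEuclideanLin via e
  have hcomm : ∀ M : Matrix (Fin n) (Fin n) ℂ,
      (Matrix.toEuclideanLin M).comp (e : (Fin n → ℂ) →ₗ[ℂ] E) =
        (e : (Fin n → ℂ) →ₗ[ℂ] E).comp (Matrix.toLin' M) := by
    intro M
    refine LinearMap.ext fun x => ?_
    rfl
  let V' : Submodule ℂ E := V.map (e : (Fin n → ℂ) →ₗ[ℂ] E)
  let W' : Submodule ℂ E := ⨆ i, V'.map (f i)
  have hW'map : W' = (⨆ i, V.map (Matrix.toLin' (A i))).map (e : (Fin n → ℂ) →ₗ[ℂ] E) := by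
    rw [Submodule.map_iSup]
    refine iSup_congr fun i => ?_
    show Submodule.map (Matrix.toEuclideanLin (A i)) (Submodule.map _ V) = _
    rw [← Submodule.map_comp, hcomm, Submodule.map_comp]
  have hrankW : Module.finrank ℂ W' =
      Module.finrank ℂ (⨆ i, V.map (Matrix.toLin' (A i)) : Submodule ℂ (Fin n → ℂ)) := by
    rw [hW'map]; exact LinearEquiv.finrank_map_eq e _
  have hrankV : Module.finrank ℂ V' = Module.finrank ℂ V := LinearEquiv.finrank_map_eq e V
  rw [← hrankW, ← hrankV]
  -- transfer hypotheses to Euclidean linear maps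
  have h2' : ∑ i, (LinearMap.adjoint (f i)).comp (f i) = LinearMap.id := by
    have := congrArg Matrix.toEuclideanLin h2
    rw [map_sum, toEuclideanLin_one] at this
    rw [← this]
    refine Finset.sum_congr rfl fun i _ => ?_
    rw [toEuclideanLin_mul, Matrix.toEuclideanLin_conjTranspose_eq_adjoint]
  have h1' : ∑ i, (f i).comp (LinearMap.adjoint (f i)) = LinearMap.id := by
    have := congrArg Matrix.toEuclideanLin h1
    rw [map_sum, toEuclideanLin_one] at this
    rw [← this]
    refine Finset.sum_congr rfl fun i _ => ?_
    rw [toEuclideanLin_mul, Matrix.toEuclideanLin_conjTranspose_eq_adjoint]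
  -- the orthogonal projection onto W' as an endomorphism
  let Q : E →ₗ[ℂ] E := W'.subtype.comp (W'.orthogonalProjectionOnto).toLinearMap
  have hQmem : ∀ x : E, Q x ∈ W' := fun x => (W'.orthogonalProjectionOnto x).2
  have hQid : ∀ x ∈ W', Q x = x := fun x hx => by
    show (W'.orthogonalProjectionOnto x : E) = x
    exact Submodule.starProjection_eq_self_iff.mpr hx
  -- the key operator
  let K : E →ₗ[ℂ] E := ∑ i, (LinearMap.adjoint (f i)).comp (Q.comp (f i))
  have hKapp : ∀ x : E, K x = ∑ i, LinearMap.adjoint (f i) (Q (f i x)) := by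
    intro x; simp [K, LinearMap.sum_apply]
  have hKfix : ∀ v ∈ V', K v = v := by
    intro v hv
    have hfi : ∀ i, Q (f i v) = f i v := fun i =>
      hQid _ (le_iSup (fun i => V'.map (f i)) i (Submodule.mem_map_of_mem hv))
    rw [hKapp]
    simp_rw [hfi]
    have : (∑ i, (LinearMap.adjoint (f i)).comp (f i)) v = v := by rw [h2']; rfl
    simpa [LinearMap.sum_apply] using this
  have hQinner : ∀ y : E, ⟪y, Q y⟫_ℂ = ⟪Q y, Q y⟫_ℂ := by
    intro y
    have hy : (y - Q y) ∈ W'ᗮ := Submodule.sub_starProjection_mem_orthogonal y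
    calc ⟪y, Q y⟫_ℂ = ⟪Q y + (y - Q y), Q y⟫_ℂ := by rw [add_sub_cancel]
      _ = ⟪Q y, Q y⟫_ℂ + ⟪y - Q y, Q y⟫_ℂ := inner_add_left _ _ _
      _ = ⟪Q y, Q y⟫_ℂ := by
          rw [(Submodule.mem_orthogonal' W' _).mp hy _ (hQmem y), add_zero]
  have hKpos : ∀ x : E, 0 ≤ (⟪x, K x⟫_ℂ).re := by
    intro x
    rw [hKapp]
    rw [inner_sum]
    rw [Complex.re_sum]
    refine Finset.sum_nonneg fun i _ => ?_
    have h1x : ⟪x, (LinearMap.adjoint (f i)) (Q ((f i) x))⟫_ℂ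
        = ⟪(f i) x, Q ((f i) x)⟫_ℂ := LinearMap.adjoint_inner_right (f i) x (Q ((f i) x))
    rw [h1x, hQinner, inner_self_eq_norm_sq_to_K]
    norm_cast
    exact (by positivity : (0:ℝ) ≤ ‖Q ((f i) x)‖ ^ 2).trans_eq (Complex.ofReal_re _).symm
  -- trace of K
  have hproj : LinearMap.IsProj W' Q := ⟨hQmem, hQid⟩
  have htrace : LinearMap.trace ℂ E K = (Module.finrank ℂ W' : ℂ) := by
    calc LinearMap.trace ℂ E K
        = ∑ i, LinearMap.trace ℂ E ((LinearMap.adjoint (f i)).comp (Q.comp (f i))) :=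
          map_sum _ _ _
      _ = ∑ i, LinearMap.trace ℂ E ((Q.comp (f i)).comp (LinearMap.adjoint (f i))) :=
          Finset.sum_congr rfl fun i _ =>
            LinearMap.trace_comp_comm' (Q.comp (f i)) (LinearMap.adjoint (f i))
      _ = LinearMap.trace ℂ E (Q * ∑ i, (f i) * (LinearMap.adjoint (f i))) := by
          rw [← map_sum]
          congr 1
          rw [Finset.mul_sum]
          exact Finset.sum_congr rfl fun i _ => (mul_assoc Q (f i) (LinearMap.adjoint (f i))).symm
      _ = LinearMap.trace ℂ E Q := by
          have : ∑ i, (f i) * (LinearMap.adjoint (f i)) = 1 := h1'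
          rw [this, mul_one]
      _ = (Module.finrank ℂ W' : ℂ) := hproj.trace
  -- orthonormal basis of V' extended to an orthonormal basis of E
  set k := Module.finrank ℂ V' with hk
  let b0 := stdOrthonormalBasis ℂ V'
  let g : Fin k → E := fun j => (b0 j : E)
  have hgon : Orthonormal ℂ g := b0.orthonormal.comp_linearIsometry V'.subtypeₗᵢ
  have hginj : Function.Injective g := hgon.linearIndependent.injective
  have hv : Orthonormal ℂ ((↑) : Set.range g → E) :=
    (orthonormal_subtype_range hginj).mpr hgon
  obtain ⟨u, b, hvu, hbu⟩ := hv.exists_orthonormalBasis_extension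
  have htr2 : LinearMap.trace ℂ E K = ∑ j : u, ⟪b j, K (b j)⟫_ℂ := by
    rw [LinearMap.trace_eq_matrix_trace ℂ b.toBasis, Matrix.trace]
    refine Finset.sum_congr rfl fun j _ => ?_
    rw [Matrix.diag_apply, LinearMap.toMatrix_apply, OrthonormalBasis.coe_toBasis_repr_apply,
      OrthonormalBasis.repr_apply_apply, OrthonormalBasis.coe_toBasis]
  have hfix1 : ∀ j : Fin k, (⟪g j, K (g j)⟫_ℂ).re = 1 := by
    intro j
    have hmem : g j ∈ V' := (b0 j).2
    rw [hKfix _ hmem, inner_self_eq_norm_sq_to_K, hgon.1 j]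
    norm_num
  have hsub : Finset.image g Finset.univ ⊆ u := by
    intro x hx
    simp only [Finset.mem_image] at hx
    obtain ⟨j, _, rfl⟩ := hx
    exact hvu (Set.mem_range_self j)
  have hsum_le : (k : ℝ) ≤ (LinearMap.trace ℂ E K).re := by
    rw [htr2, Complex.re_sum]
    have step1 : ∑ x ∈ Finset.image g Finset.univ, (⟪x, K x⟫_ℂ).re ≤
        ∑ x ∈ u, (⟪x, K x⟫_ℂ).re :=
      Finset.sum_le_sum_of_subset_of_nonneg hsub fun x _ _ => hKpos x
    have step0 : (k : ℝ) = ∑ x ∈ Finset.image g Finset.univ, (⟪x, K x⟫_ℂ).re := by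
      rw [Finset.sum_image (fun a _ c _ h => hginj h)]
      simp [hfix1]
    have step2 : ∑ x ∈ u, (⟪x, K x⟫_ℂ).re = ∑ j : u, (⟪b j, K (b j)⟫_ℂ).re := by
      rw [← Finset.sum_coe_sort u (fun x => (⟪x, K x⟫_ℂ).re)]
      refine Finset.sum_congr rfl fun j _ => ?_
      rw [show b j = (j : E) from congrFun hbu j]
    rw [← step2]
    exact step0.trans_le step1
  have hfinal : (k : ℝ) ≤ (Module.finrank ℂ W' : ℝ) := by
    rw [htrace] at hsum_le
    simpa using hsum_le
  exact_mod_cast hfinal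
end

section
/- Let A be an n×n non-negative matrix with all row sums equal to 1 (row-stochastic), and let c_1,...,c_n be its column sums. If Σ_j (c_j - 1)² ≤ 1/(n+1), then the bipartite graph on the support of A has a perfect matching (equivalently, perm(A) > 0). -/
theorem row_stochastic_near_doublyStochastic_has_matching {n : ℕ}
    (A : Matrix (Fin n) (Fin n) ℝ)
    (hnonneg : ∀ i j, 0 ≤ A i j)
    (hrow : ∀ i, ∑ j, A i j = 1)
    (hcol : ∑ j, ((∑ i, A i j) - 1) ^ 2 ≤ 1 / ((n : ℝ) + 1)) :
    ∃ σ : Equiv.Perm (Fin n), ∀ i, 0 < A i (σ i) := by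
  classical
  set t : Fin n → Finset (Fin n) := fun j => Finset.univ.filter (fun i => 0 < A i j) with ht
  have hall : ∀ S : Finset (Fin n), S.card ≤ (S.biUnion t).card := by
    intro S
    by_contra hlt
    push_neg at hlt
    set T := S.biUnion t with hT
    have hSne : S.Nonempty := by
      rcases Finset.eq_empty_or_nonempty S with h | h
      · simp [h] at hlt
      · exact h
    -- sum of column sums over S
    have hzero : ∀ i ∉ T, ∀ j ∈ S, A i j = 0 := by
      intro i hi j hj
      by_contra h
      have hpos : 0 < A i j := lt_of_le_of_ne (hnonneg i j) (Ne.symm h)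
      exact hi (Finset.mem_biUnion.2 ⟨j, hj, by simp [ht, hpos]⟩)
    have hsum : ∑ j ∈ S, (∑ i, A i j) ≤ (T.card : ℝ) := by
      have h1 : ∑ j ∈ S, (∑ i, A i j) = ∑ i, ∑ j ∈ S, A i j :=
        Finset.sum_comm
      have h2 : ∑ i, ∑ j ∈ S, A i j = ∑ i ∈ T, ∑ j ∈ S, A i j := by
        rw [← Finset.sum_subset (Finset.subset_univ T)]
        intro i _ hi
        exact Finset.sum_eq_zero (fun j hj => hzero i hi j hj)
      have h3 : ∑ i ∈ T, ∑ j ∈ S, A i j ≤ ∑ i ∈ T, (1 : ℝ) := by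
        apply Finset.sum_le_sum
        intro i _
        calc ∑ j ∈ S, A i j ≤ ∑ j, A i j :=
              Finset.sum_le_sum_of_subset_of_nonneg (Finset.subset_univ S)
                (fun j _ _ => hnonneg i j)
          _ = 1 := hrow i
      rw [h1, h2]
      simpa using h3
    have hTS : (T.card : ℝ) ≤ (S.card : ℝ) - 1 := by
      have : T.card + 1 ≤ S.card := hlt
      have := Nat.cast_le (α := ℝ) |>.2 this
      push_cast at this
      linarith
    have hdev : ∑ j ∈ S, ((∑ i, A i j) - 1) ≤ -1 := by
      rw [Finset.sum_sub_distrib]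
      simp only [Finset.sum_const, nsmul_eq_mul, mul_one]
      linarith
    have hsq : (1 : ℝ) ≤ (∑ j ∈ S, ((∑ i, A i j) - 1)) ^ 2 := by
      have h1 : (1 : ℝ) ≤ -(∑ j ∈ S, ((∑ i, A i j) - 1)) := by linarith
      calc (1 : ℝ) = 1 ^ 2 := by ring
        _ ≤ (-(∑ j ∈ S, ((∑ i, A i j) - 1))) ^ 2 := by
            apply pow_le_pow_left₀ (by norm_num) h1
        _ = (∑ j ∈ S, ((∑ i, A i j) - 1)) ^ 2 := by ring
    have hcs : (∑ j ∈ S, ((∑ i, A i j) - 1)) ^ 2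
        ≤ (S.card : ℝ) * ∑ j ∈ S, ((∑ i, A i j) - 1) ^ 2 :=
      sq_sum_le_card_mul_sum_sq
    have hsub : ∑ j ∈ S, ((∑ i, A i j) - 1) ^ 2 ≤ ∑ j, ((∑ i, A i j) - 1) ^ 2 :=
      Finset.sum_le_sum_of_subset_of_nonneg (Finset.subset_univ S)
        (fun j _ _ => sq_nonneg _)
    have hScard : (S.card : ℝ) ≤ n := by
      exact_mod_cast Nat.cast_le.2 (le_trans (Finset.card_le_univ S) (by simp))
    have hn1 : (0 : ℝ) < (n : ℝ) + 1 := by positivity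
    have : (1 : ℝ) ≤ (n : ℝ) * (1 / ((n : ℝ) + 1)) := by
      calc (1 : ℝ) ≤ (∑ j ∈ S, ((∑ i, A i j) - 1)) ^ 2 := hsq
        _ ≤ (S.card : ℝ) * ∑ j ∈ S, ((∑ i, A i j) - 1) ^ 2 := hcs
        _ ≤ (n : ℝ) * ∑ j ∈ S, ((∑ i, A i j) - 1) ^ 2 := by
            apply mul_le_mul_of_nonneg_right hScard
            exact Finset.sum_nonneg (fun j _ => sq_nonneg _)
        _ ≤ (n : ℝ) * ∑ j, ((∑ i, A i j) - 1) ^ 2 := by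
            apply mul_le_mul_of_nonneg_left hsub (Nat.cast_nonneg n)
        _ ≤ (n : ℝ) * (1 / ((n : ℝ) + 1)) := by
            apply mul_le_mul_of_nonneg_left hcol (Nat.cast_nonneg n)
    rw [mul_one_div, le_div_iff₀ hn1] at this
    linarith
  obtain ⟨f, hf_inj, hf_mem⟩ :=
    (Finset.all_card_le_biUnion_card_iff_exists_injective t).1 hall
  have hf_bij : Function.Bijective f :=
    (Finite.injective_iff_bijective).1 hf_inj
  let e := Equiv.ofBijective f hf_bij
  refine ⟨e.symm, fun i => ?_⟩
  have h := hf_mem (e.symm i)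
  simp only [ht, Finset.mem_filter] at h
  have : f (e.symm i) = i := e.apply_symm_apply i
  rw [this] at h
  exact h.2
end

section
/- Let A ∈ Ten(n,...,n) be a d-fold tensor (d ≥ 2) over ℂ with slice-rank strictly less than n. Then A lies in the null cone of the action of SL(n)^d: there is a sequence g^{(k)} = (g_1^{(k)},...,g_d^{(k)}) of tuples in SL(n,ℂ)^d with (g_1^{(k)} ⊗ ... ⊗ g_d^{(k)}) A → 0. -/
open Filter

/-- The action of a tuple of `n × n` matrices `g = (g_1, ..., g_d)` on a `d`-fold tensor
`A ∈ (ℂ^n)^{⊗ d}`, represented as a function on index tuples: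
`((g_1 ⊗ ⋯ ⊗ g_d) A)(x) = ∑_e (∏ i, (g_i)_{x_i, e_i}) A(e)`. -/
noncomputable def tensorAction {d n : ℕ} (g : Fin d → Matrix (Fin n) (Fin n) ℂ)
    (A : (Fin d → Fin n) → ℂ) : (Fin d → Fin n) → ℂ :=
  fun x => ∑ e : Fin d → Fin n, (∏ i, g i (x i) (e i)) * A e

/-- A tensor has slice-rank one if it is the product of a vector in some coordinate `j`
with a tensor not depending on coordinate `j`. -/
def SliceRankOne {d n : ℕ} (B : (Fin d → Fin n) → ℂ) : Prop :=
  ∃ (j : Fin d) (v : Fin n → ℂ) (C : (Fin d → Fin n) → ℂ),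
    (∀ x y : Fin d → Fin n, (∀ i, i ≠ j → x i = y i) → C x = C y) ∧
    ∀ x, B x = v (x j) * C x

section helpers

open Matrix Module Submodule

variable {d n : ℕ}


lemma tensorAction_mul (g h : Fin d → Matrix (Fin n) (Fin n) ℂ) (A : (Fin d → Fin n) → ℂ) :
    tensorAction (fun i => g i * h i) A = tensorAction g (tensorAction h A) := by
  funext x
  unfold tensorAction
  have key : ∀ f : Fin d → Fin n, (∏ i, (g i * h i) (x i) (f i)) =
      ∑ e : Fin d → Fin n, ∏ i, g i (x i) (e i) * h i (e i) (f i) := by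
    intro f
    simp only [Matrix.mul_apply]
    rw [Finset.prod_univ_sum]
    rw [Fintype.piFinset_univ]
  calc ∑ f : Fin d → Fin n, (∏ i, (g i * h i) (x i) (f i)) * A f
      = ∑ f : Fin d → Fin n, ∑ e : Fin d → Fin n,
          (∏ i, g i (x i) (e i)) * ((∏ i, h i (e i) (f i)) * A f) := by
        refine Finset.sum_congr rfl fun f _ => ?_
        rw [key f, Finset.sum_mul]
        refine Finset.sum_congr rfl fun e _ => ?_
        rw [Finset.prod_mul_distrib, mul_assoc]
    _ = ∑ e : Fin d → Fin n, (∏ i, g i (x i) (e i)) *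
          ∑ f : Fin d → Fin n, (∏ i, h i (e i) (f i)) * A f := by
        rw [Finset.sum_comm]
        refine Finset.sum_congr rfl fun e _ => ?_
        rw [Finset.mul_sum]

lemma tensorAction_sum {k : ℕ} (g : Fin d → Matrix (Fin n) (Fin n) ℂ)
    (B : Fin k → ((Fin d → Fin n) → ℂ)) :
    tensorAction g (∑ t, B t) = ∑ t, tensorAction g (B t) := by
  funext x
  simp only [tensorAction, Finset.sum_apply, Finset.mul_sum]
  rw [Finset.sum_comm]

lemma tensorAction_diagonal (dv : Fin d → Fin n → ℂ) (A : (Fin d → Fin n) → ℂ)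
    (x : Fin d → Fin n) :
    tensorAction (fun i => Matrix.diagonal (dv i)) A x = (∏ i, dv i (x i)) * A x := by
  unfold tensorAction
  rw [Finset.sum_eq_single x]
  · simp [Matrix.diagonal_apply_eq]
  · intro e _ hne
    have : ∃ i, x i ≠ e i := by
      by_contra hc
      push_neg at hc
      exact hne (funext fun i => (hc i).symm)
    obtain ⟨i, hi⟩ := this
    apply mul_eq_zero_of_left
    exact Finset.prod_eq_zero (Finset.mem_univ i) (Matrix.diagonal_apply_ne _ hi)
  · simp

lemma tensorAction_slice_eq_zero (h : Fin d → Matrix (Fin n) (Fin n) ℂ)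
    {B : (Fin d → Fin n) → ℂ} {j : Fin d} {v : Fin n → ℂ} {C : (Fin d → Fin n) → ℂ}
    (hC : ∀ x y : Fin d → Fin n, (∀ i, i ≠ j → x i = y i) → C x = C y)
    (hB : ∀ x, B x = v (x j) * C x)
    (x : Fin d → Fin n) (hv : (h j *ᵥ v) (x j) = 0) :
    tensorAction h B x = 0 := by
  classical
  set E := Equiv.funSplitAt j (Fin n) with hE
  have hEj : ∀ (a : Fin n) (e' : {i : Fin d // i ≠ j} → Fin n), E.symm (a, e') j = a := by
    intro a e'
    simp [hE, Equiv.funSplitAt, Equiv.piSplitAt]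
  have hEne : ∀ (a : Fin n) (e' : {i : Fin d // i ≠ j} → Fin n) (i : Fin d) (hi : i ≠ j),
      E.symm (a, e') i = e' ⟨i, hi⟩ := by
    intro a e' i hi
    simp [hE, Equiv.funSplitAt, Equiv.piSplitAt, dif_neg hi]
  unfold tensorAction
  rw [← Equiv.sum_comp E.symm (fun e => (∏ i, h i (x i) (e i)) * B e)]
  rw [Fintype.sum_prod_type]
  have key : ∀ (a : Fin n) (e' : {i : Fin d // i ≠ j} → Fin n),
      (∏ i, h i (x i) (E.symm (a, e') i)) * B (E.symm (a, e')) =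
      (h j (x j) a * v a) *
        ((∏ i ∈ Finset.univ.erase j, h i (x i) (E.symm (x j, e') i)) * C (E.symm (x j, e'))) := by
    intro a e'
    rw [← Finset.mul_prod_erase Finset.univ _ (Finset.mem_univ j)]
    rw [hB]
    rw [hEj]
    have h1 : (∏ i ∈ Finset.univ.erase j, h i (x i) (E.symm (a, e') i)) =
        ∏ i ∈ Finset.univ.erase j, h i (x i) (E.symm (x j, e') i) := by
      refine Finset.prod_congr rfl fun i hi => ?_
      have hij : i ≠ j := (Finset.mem_erase.1 hi).1
      rw [hEne a e' i hij, hEne (x j) e' i hij]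
    have h2 : C (E.symm (a, e')) = C (E.symm (x j, e')) := by
      refine hC _ _ fun i hij => ?_
      rw [hEne a e' i hij, hEne (x j) e' i hij]
    rw [h1, h2]
    ring
  calc ∑ a : Fin n, ∑ e' : {i : Fin d // i ≠ j} → Fin n,
        (∏ i, h i (x i) (E.symm (a, e') i)) * B (E.symm (a, e'))
      = ∑ a : Fin n, ∑ e' : {i : Fin d // i ≠ j} → Fin n,
        (h j (x j) a * v a) *
          ((∏ i ∈ Finset.univ.erase j, h i (x i) (E.symm (x j, e') i)) * C (E.symm (x j, e'))) := by
        exact Finset.sum_congr rfl fun a _ => Finset.sum_congr rfl fun e' _ => key a e'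
    _ = (∑ a : Fin n, h j (x j) a * v a) *
          ∑ e' : {i : Fin d // i ≠ j} → Fin n,
            (∏ i ∈ Finset.univ.erase j, h i (x i) (E.symm (x j, e') i)) * C (E.symm (x j, e')) := by
        rw [Finset.sum_mul_sum]
    _ = 0 := by
        have : (∑ a : Fin n, h j (x j) a * v a) = 0 := by
          rw [← hv]; simp [Matrix.mulVec, dotProduct]
        rw [this, zero_mul]



lemma card_filter_lt (r : ℕ) (hr : r ≤ n) :
    (Finset.univ.filter fun l : Fin n => l.val < r).card = r := by
  rw [← Fintype.card_subtype]
  have e : {l : Fin n // l.val < r} ≃ Fin r :=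
    { toFun := fun l => ⟨l.1.1, l.2⟩
      invFun := fun a => ⟨⟨a.1, lt_of_lt_of_le a.2 hr⟩, a.2⟩
      left_inv := fun l => by apply Subtype.ext; apply Fin.ext; rfl
      right_inv := fun a => rfl }
  rw [Fintype.card_congr e, Fintype.card_fin]

lemma det_dv (r : ℕ) (hr : r ≤ n) (τ : ℂ) (hτ : τ ≠ 0) :
    Matrix.det (Matrix.diagonal fun l : Fin n => if l.val < r then τ⁻¹ ^ (n - r) else τ ^ r)
      = 1 := by
  rw [Matrix.det_diagonal, Finset.prod_ite, Finset.prod_const, Finset.prod_const,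
    card_filter_lt r hr]
  have hcard : (Finset.univ.filter fun l : Fin n => ¬ l.val < r).card = n - r := by
    have := Finset.card_filter_add_card_filter_not
      (s := (Finset.univ : Finset (Fin n))) (p := fun l : Fin n => l.val < r)
    rw [card_filter_lt r hr, Finset.card_univ, Fintype.card_fin] at this
    omega
  rw [hcard, ← pow_mul, ← pow_mul, inv_pow, Nat.mul_comm]
  exact inv_mul_cancel₀ (pow_ne_zero _ hτ)

lemma exists_good_matrix (hn : 0 < n) (r : ℕ) (hr : r < n) (W : Submodule ℂ (Fin n → ℂ))
    (hW : finrank ℂ W ≤ r) :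
    ∃ M : Matrix (Fin n) (Fin n) ℂ, M.det = 1 ∧
      ∀ w ∈ W, ∀ l : Fin n, r ≤ l.val → (M *ᵥ w) l = 0 := by
  classical
  set m := finrank ℂ W with hm
  have hmn : m ≤ n := le_trans hW (le_of_lt hr)
  set emb : Fin m → Fin n := Fin.castLE hmn with hemb
  set b : Fin m → (Fin n → ℂ) := fun a => Pi.single (emb a) (1 : ℂ) with hb
  have hli : LinearIndependent ℂ b := by
    have := (Pi.basisFun ℂ (Fin n)).linearIndependent.comp emb (Fin.castLE_injective hmn)
    convert this using 1
    funext a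
    simp [hb, Function.comp]
  set U₀ : Submodule ℂ (Fin n → ℂ) := span ℂ (Set.range b) with hU₀
  have hU₀rank : finrank ℂ U₀ = m := by
    rw [hU₀, finrank_span_eq_card hli, Fintype.card_fin]
  have hU₀zero : ∀ u ∈ U₀, ∀ l : Fin n, r ≤ l.val → u l = 0 := by
    intro u hu l hl
    have hle : U₀ ≤ LinearMap.ker (LinearMap.proj (R := ℂ) (φ := fun _ : Fin n => ℂ) l) := by
      rw [hU₀, span_le]
      rintro _ ⟨a, rfl⟩
      simp only [SetLike.mem_coe, LinearMap.mem_ker, LinearMap.proj_apply]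
      have : emb a ≠ l := by
        intro hcontra
        have : (emb a).val = l.val := congrArg Fin.val hcontra
        have ha : (emb a).val = a.val := rfl
        omega
      show b a l = 0
      rw [hb]
      exact Pi.single_eq_of_ne (Ne.symm this) 1
    exact hle hu
  obtain ⟨W', hW'⟩ := Submodule.exists_isCompl W
  obtain ⟨U', hU'⟩ := Submodule.exists_isCompl U₀
  have hfr1 : finrank ℂ W = finrank ℂ U₀ := by rw [hU₀rank]
  have hfr2 : finrank ℂ W' = finrank ℂ U' := by
    have h1 := Submodule.finrank_add_eq_of_isCompl hW'
    have h2 := Submodule.finrank_add_eq_of_isCompl hU'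
    omega
  set e₁ : W ≃ₗ[ℂ] U₀ := LinearEquiv.ofFinrankEq _ _ hfr1 with he₁
  set e₂ : W' ≃ₗ[ℂ] U' := LinearEquiv.ofFinrankEq _ _ hfr2 with he₂
  set F : (Fin n → ℂ) ≃ₗ[ℂ] (Fin n → ℂ) :=
    (Submodule.prodEquivOfIsCompl W W' hW').symm.trans
      ((e₁.prodCongr e₂).trans (Submodule.prodEquivOfIsCompl U₀ U' hU')) with hF
  have hFW : ∀ w ∈ W, ∀ l : Fin n, r ≤ l.val → F w l = 0 := by
    intro w hw l hl
    have h1 : (Submodule.prodEquivOfIsCompl W W' hW').symm w = (⟨w, hw⟩, 0) := by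
      rw [LinearEquiv.symm_apply_eq, Submodule.coe_prodEquivOfIsCompl']
      simp
    have h2 : F w = (e₁ ⟨w, hw⟩ : Fin n → ℂ) := by
      rw [hF]
      simp only [LinearEquiv.trans_apply, h1, LinearEquiv.prodCongr_apply, map_zero,
        Submodule.coe_prodEquivOfIsCompl']
      simp
    rw [h2]
    exact hU₀zero _ (e₁ ⟨w, hw⟩).2 l hl
  set M₀ := LinearMap.toMatrix' (F : (Fin n → ℂ) →ₗ[ℂ] (Fin n → ℂ)) with hM₀
  have hc : M₀.det ≠ 0 := by
    rw [hM₀, LinearMap.det_toMatrix']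
    exact IsUnit.ne_zero (LinearEquiv.isUnit_det' F)
  set last : Fin n := ⟨n - 1, by omega⟩ with hlast
  set Dcorr := Matrix.diagonal (fun l : Fin n => if l = last then M₀.det⁻¹ else 1) with hD
  refine ⟨Dcorr * M₀, ?_, ?_⟩
  · rw [Matrix.det_mul, hD, Matrix.det_diagonal, Finset.prod_ite_eq' Finset.univ last]
    simp [inv_mul_cancel₀ hc]
  · intro w hw l hl
    rw [← Matrix.mulVec_mulVec]
    have hM₀w : M₀ *ᵥ w = F w := by
      rw [hM₀]
      have := Matrix.toLin'_toMatrix' (R := ℂ) (F : (Fin n → ℂ) →ₗ[ℂ] (Fin n → ℂ))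
      rw [← Matrix.toLin'_apply, this]
      rfl
    rw [hM₀w, hD, Matrix.mulVec_diagonal]
    rw [hFW w hw l hl, mul_zero]


lemma dv_prod_bound (r : Fin d → ℕ) (k : ℕ) (hsum : ∑ i, r i = k) (hk : k < n)
    (j : Fin d) (x : Fin d → Fin n) (hx : (x j).val < r j) (m : ℕ) :
    ‖∏ i, (if (x i).val < r i then (((m + 1 : ℕ) : ℂ))⁻¹ ^ (n - r i)
        else ((m + 1 : ℕ) : ℂ) ^ (r i))‖ ≤ (((m + 1 : ℕ) : ℝ))⁻¹ ^ (n - k) := by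
  classical
  set τ : ℝ := ((m + 1 : ℕ) : ℝ) with hτ
  have hτ1 : 1 ≤ τ := by rw [hτ]; exact_mod_cast Nat.succ_le_succ (Nat.zero_le m)
  have hτ0 : (0 : ℝ) < τ := lt_of_lt_of_le one_pos hτ1
  have hnorm : ∀ i : Fin d,
      ‖if (x i).val < r i then (((m + 1 : ℕ) : ℂ))⁻¹ ^ (n - r i)
        else ((m + 1 : ℕ) : ℂ) ^ (r i)‖
      = if (x i).val < r i then τ⁻¹ ^ (n - r i) else τ ^ (r i) := by
    intro i
    have habs : ‖((m : ℂ) + 1)‖ = (m : ℝ) + 1 := by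
      rw [show ((m : ℂ) + 1) = ((m + 1 : ℕ) : ℂ) by push_cast; ring, Complex.norm_natCast]
      push_cast; ring
    split_ifs <;> simp [hτ, habs]
  rw [norm_prod]
  simp only [hnorm]
  rw [← Finset.mul_prod_erase Finset.univ _ (Finset.mem_univ j), if_pos hx]
  set a : ℕ := ∑ i ∈ Finset.univ.erase j, r i with ha
  have hra : r j + a = k := by
    rw [ha, Finset.add_sum_erase Finset.univ r (Finset.mem_univ j), hsum]
  have hprodle : (∏ i ∈ Finset.univ.erase j,
      (if (x i).val < r i then τ⁻¹ ^ (n - r i) else τ ^ (r i))) ≤ τ ^ a := by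
    rw [ha, ← Finset.prod_pow_eq_pow_sum]
    refine Finset.prod_le_prod (fun i _ => ?_) (fun i _ => ?_)
    · split_ifs <;> positivity
    · split_ifs
      · calc τ⁻¹ ^ (n - r i) ≤ 1 := by
              apply pow_le_one₀ (by positivity)
              exact inv_le_one_of_one_le₀ hτ1
          _ ≤ τ ^ (r i) := one_le_pow₀ hτ1
      · exact le_refl _
  calc τ⁻¹ ^ (n - r j) * ∏ i ∈ Finset.univ.erase j,
        (if (x i).val < r i then τ⁻¹ ^ (n - r i) else τ ^ (r i))
      ≤ τ⁻¹ ^ (n - r j) * τ ^ a := by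
        exact mul_le_mul_of_nonneg_left hprodle (by positivity)
    _ = τ⁻¹ ^ (n - k) := by
        have hnr : n - r j = a + (n - k) := by omega
        rw [hnr, pow_add]
        have hcancel : τ⁻¹ ^ a * τ ^ a = 1 := by
          rw [← mul_pow, inv_mul_cancel₀ (ne_of_gt hτ0), one_pow]
        calc τ⁻¹ ^ a * τ⁻¹ ^ (n - k) * τ ^ a
            = (τ⁻¹ ^ a * τ ^ a) * τ⁻¹ ^ (n - k) := by ring
          _ = τ⁻¹ ^ (n - k) := by rw [hcancel, one_mul]

lemma inv_pow_tendsto (s : ℕ) (hs : s ≠ 0) (c : ℝ) :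
    Tendsto (fun m : ℕ => (((m + 1 : ℕ) : ℝ))⁻¹ ^ s * c) atTop (nhds 0) := by
  have h1 : Tendsto (fun m : ℕ => ((m + 1 : ℕ) : ℝ)) atTop atTop := by
    exact tendsto_natCast_atTop_atTop.comp (tendsto_add_atTop_nat 1)
  have h2 : Tendsto (fun m : ℕ => (((m + 1 : ℕ) : ℝ))⁻¹) atTop (nhds 0) :=
    h1.inv_tendsto_atTop
  have h3 := (h2.pow s).mul_const c
  rw [zero_pow hs, zero_mul] at h3
  exact h3

end helpers

open Matrix Module in
theorem sliceRank_lt_implies_nullcone {d n : ℕ} (hd : 2 ≤ d)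
    (A : (Fin d → Fin n) → ℂ)
    (hsr : ∃ k : ℕ, k < n ∧ ∃ B : Fin k → ((Fin d → Fin n) → ℂ),
      (∀ i, SliceRankOne (B i)) ∧ A = ∑ i, B i) :
    ∃ g : ℕ → Fin d → Matrix (Fin n) (Fin n) ℂ,
      (∀ k i, (g k i).det = 1) ∧
      Tendsto (fun k => tensorAction (g k) A) atTop (nhds 0) := by
  classical
  obtain ⟨k, hk, B, hB1, hB2⟩ := hsr
  have hn : 0 < n := lt_of_le_of_lt (Nat.zero_le k) hk
  choose jf vf Cf hCf hBf using hB1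
  set r : Fin d → ℕ := fun i => Fintype.card {t : Fin k // jf t = i} with hrdef
  have hrk : ∀ i, r i ≤ k := by
    intro i
    have := Fintype.card_subtype_le (fun t : Fin k => jf t = i)
    simpa using this
  have hsum : ∑ i, r i = k := by
    have hcg := Fintype.card_congr (Equiv.sigmaFiberEquiv jf)
    rw [Fintype.card_sigma, Fintype.card_fin] at hcg
    exact hcg
  have hM : ∀ i : Fin d, ∃ M : Matrix (Fin n) (Fin n) ℂ, M.det = 1 ∧
      ∀ t : Fin k, jf t = i → ∀ l : Fin n, r i ≤ l.val → (M *ᵥ vf t) l = 0 := by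
    intro i
    have hri : r i < n := lt_of_le_of_lt (hrk i) hk
    have hfr : Module.finrank ℂ
        (Submodule.span ℂ (Set.range fun t : {t : Fin k // jf t = i} => vf t.1)) ≤ r i := by
      have := finrank_range_le_card (R := ℂ) (fun t : {t : Fin k // jf t = i} => vf t.1)
      rw [hrdef]
      exact this
    obtain ⟨M, h1, h2⟩ := exists_good_matrix hn (r i) hri _ hfr
    refine ⟨M, h1, fun t ht l hl => ?_⟩
    exact h2 (vf t) (Submodule.subset_span ⟨⟨t, ht⟩, rfl⟩) l hl
  choose M hMdet hMvec using hM
  set dv : ℕ → Fin d → Fin n → ℂ := fun m i l =>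
    if l.val < r i then (((m + 1 : ℕ) : ℂ))⁻¹ ^ (n - r i) else ((m + 1 : ℕ) : ℂ) ^ (r i)
    with hdv
  have hτ0 : ∀ m : ℕ, ((m + 1 : ℕ) : ℂ) ≠ 0 := by
    intro m
    exact Nat.cast_ne_zero.2 (Nat.succ_ne_zero m)
  refine ⟨fun m i => Matrix.diagonal (dv m i) * M i, ?_, ?_⟩
  · intro m i
    rw [Matrix.det_mul, hMdet, mul_one, hdv]
    exact det_dv (r i) (le_of_lt (lt_of_le_of_lt (hrk i) hk)) _ (hτ0 m)
  · rw [tendsto_pi_nhds]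
    intro x
    have hrw : ∀ m : ℕ, tensorAction (fun i => Matrix.diagonal (dv m i) * M i) A x
        = ∑ t : Fin k, (∏ i, dv m i (x i)) * (tensorAction M (B t)) x := by
      intro m
      rw [tensorAction_mul (fun i => Matrix.diagonal (dv m i)) M A, hB2, tensorAction_sum,
        tensorAction_sum]
      simp only [Finset.sum_apply]
      exact Finset.sum_congr rfl fun t _ => tensorAction_diagonal (dv m) _ x
    simp only [hrw, Pi.zero_apply]
    have htend : Tendsto (fun m : ℕ => ∑ t : Fin k,
        (∏ i, dv m i (x i)) * (tensorAction M (B t)) x) atTop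
        (nhds (∑ _t : Fin k, (0 : ℂ))) := by
      apply tendsto_finset_sum
      intro t _
      by_cases hx : (x (jf t)).val < r (jf t)
      · apply squeeze_zero_norm
          (a := fun m : ℕ => (((m + 1 : ℕ) : ℝ))⁻¹ ^ (n - k) * ‖tensorAction M (B t) x‖)
        · intro m
          rw [norm_mul]
          refine mul_le_mul_of_nonneg_right ?_ (norm_nonneg _)
          exact dv_prod_bound r k hsum hk (jf t) x hx m
        · exact inv_pow_tendsto (n - k) (by omega) _
      · have hz : tensorAction M (B t) x = 0 := by
          refine tensorAction_slice_eq_zero M (hCf t) (hBf t) x ?_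
          exact hMvec (jf t) t rfl (x (jf t)) (le_of_not_gt hx)
        simp only [hz, mul_zero]
        exact tendsto_const_nhds
    simpa using htend
end
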